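/- Let n ≥ 1, a ∈ ℝ, σ > 0. Let z₁,…,zₙ be i.i.d. Gaussian random variables with mean 0 and variance σ², and let C = (C₁,…,Cₙ) be uniformly distributed on {−1,1}ⁿ and independent of (z₁,…,zₙ). Define yᵢ = a·Cᵢ + zᵢ and U = exp(−na²/(2σ²)) · (1/2ⁿ) · Σ_{b ∈ {−1,1}ⁿ} exp((a/σ²)·Σ_{i=1}^{n} yᵢbᵢ). Then E[U] = (cosh(a²/σ²))ⁿ. -/

import Mathlib

open MeasureTheory ProbabilityTheory Finset Real
open scoped NNReal ENNReal

lemma integrable_dirac'' {α E : Type*} [MeasurableSpace α] [MeasurableSingletonClass α]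
    [NormedAddCommGroup E] {f : α → E} (hf : StronglyMeasurable f) (a : α) :
    Integrable f (Measure.dirac a) := by
  refine ⟨hf.aestronglyMeasurable, ?_⟩
  simp [HasFiniteIntegral, lintegral_dirac]

lemma gaussianPDFReal_mul_exp {v : ℝ≥0} (hv : v ≠ 0) (u x : ℝ) :
    gaussianPDFReal 0 v x * rexp (u * x)
      = rexp ((v : ℝ) * u ^ 2 / 2) * gaussianPDFReal ((v : ℝ) * u) v x := by
  have hv' : (0 : ℝ) < v := NNReal.coe_pos.mpr (pos_iff_ne_zero.mpr hv)
  simp only [gaussianPDFReal, sub_zero]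
  rw [mul_assoc, ← Real.exp_add, mul_left_comm, ← Real.exp_add]
  congr 1
  field_simp
  ring

lemma integrable_exp_gaussian (v : ℝ≥0) (hv : v ≠ 0) (u : ℝ) :
    Integrable (fun x => rexp (u * x)) (gaussianReal 0 v) := by
  rw [gaussianReal_of_var_ne_zero _ hv, gaussianPDF_def]
  have hmeas : Measurable fun x => (gaussianPDFReal 0 v x).toNNReal :=
    (measurable_gaussianPDFReal 0 v).real_toNNReal
  rw [show (fun x => ENNReal.ofReal (gaussianPDFReal 0 v x))
      = fun x => ((gaussianPDFReal 0 v x).toNNReal : ℝ≥0∞) from rfl,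
    integrable_withDensity_iff_integrable_smul hmeas]
  have h : (fun x => ((gaussianPDFReal 0 v x).toNNReal : ℝ≥0) • rexp (u * x))
      = fun x => rexp ((v : ℝ) * u ^ 2 / 2) * gaussianPDFReal ((v : ℝ) * u) v x := by
    funext x
    rw [NNReal.smul_def, Real.coe_toNNReal _ (gaussianPDFReal_nonneg 0 v x), smul_eq_mul,
      gaussianPDFReal_mul_exp hv]
  rw [h]
  exact (integrable_gaussianPDFReal _ v).const_mul _

lemma integral_exp_gaussian (v : ℝ≥0) (hv : v ≠ 0) (u : ℝ) :
    ∫ x, rexp (u * x) ∂(gaussianReal 0 v) = rexp ((v : ℝ) * u ^ 2 / 2) := by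
  have hmeas : Measurable fun x => (gaussianPDFReal 0 v x).toNNReal :=
    (measurable_gaussianPDFReal 0 v).real_toNNReal
  rw [gaussianReal_of_var_ne_zero _ hv, gaussianPDF_def,
    show (fun x => ENNReal.ofReal (gaussianPDFReal 0 v x))
      = fun x => ((gaussianPDFReal 0 v x).toNNReal : ℝ≥0∞) from rfl,
    integral_withDensity_eq_integral_smul hmeas]
  have h : (fun x => ((gaussianPDFReal 0 v x).toNNReal : ℝ≥0) • rexp (u * x))
      = fun x => rexp ((v : ℝ) * u ^ 2 / 2) * gaussianPDFReal ((v : ℝ) * u) v x := by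
    funext x
    rw [NNReal.smul_def, Real.coe_toNNReal _ (gaussianPDFReal_nonneg 0 v x), smul_eq_mul,
      gaussianPDFReal_mul_exp hv]
  rw [h, integral_const_mul, integral_gaussianPDFReal_eq_one _ hv, mul_one]

/-- exponential of a scaled dot product -/
noncomputable def expDot {n : ℕ} (s : ℝ) (b c : Fin n → ℝ) : ℝ := rexp (s * ∑ i, c i * b i)

lemma measurable_expDot {n : ℕ} (s : ℝ) (b : Fin n → ℝ) : Measurable (expDot s b) :=
  ((Finset.univ.measurable_sum fun i _ =>
    (by fun_prop : Measurable fun x : Fin n → ℝ => x i * b i)).const_mul s).exp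

theorem stmt_14
    {Ω : Type} [MeasurableSpace Ω] (μ : Measure Ω) [IsProbabilityMeasure μ]
    (n : ℕ) (hn : 1 ≤ n) (a σ : ℝ) (hσ : 0 < σ)
    (z : Fin n → Ω → ℝ) (hzm : ∀ i, Measurable (z i))
    (hz : ∀ i, μ.map (z i) = gaussianReal 0 ⟨σ ^ 2, sq_nonneg σ⟩)
    (hzindep : iIndepFun z μ)
    (C : Ω → Fin n → ℝ) (hCm : Measurable C)
    (hCunif : μ.map C = ((2 : ENNReal) ^ n)⁻¹ •
      ∑ c ∈ Fintype.piFinset (fun _ : Fin n => ({-1, 1} : Finset ℝ)), Measure.dirac c)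
    (hCz : IndepFun C (fun ω i => z i ω) μ) :
    (∫ ω, Real.exp (-(n * a ^ 2) / (2 * σ ^ 2)) * ((1 / 2 ^ n) *
        ∑ b ∈ Fintype.piFinset (fun _ : Fin n => ({-1, 1} : Finset ℝ)),
          Real.exp ((a / σ ^ 2) * ∑ i, (a * C ω i + z i ω) * b i)) ∂μ)
      = Real.cosh (a ^ 2 / σ ^ 2) ^ n := by
  classical
  set B := Fintype.piFinset (fun _ : Fin n => ({-1, 1} : Finset ℝ)) with hB
  set t : ℝ := a / σ ^ 2 with ht
  set s : ℝ := a ^ 2 / σ ^ 2 with hs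
  set K : ℝ := -(n * a ^ 2) / (2 * σ ^ 2) with hK
  set v : ℝ≥0 := ⟨σ ^ 2, sq_nonneg σ⟩ with hvdef
  have hσ2 : (σ : ℝ) ^ 2 ≠ 0 := by positivity
  have hv : v ≠ 0 := by
    intro h
    exact hσ2 (congrArg NNReal.toReal h)
  have hvR : (v : ℝ) = σ ^ 2 := rfl
  -- integrability and integral of exp(u * z i)
  have hzint : ∀ (i : Fin n) (u : ℝ), Integrable (fun ω => rexp (u * z i ω)) μ := by
    intro i u
    have h := integrable_exp_gaussian v hv u
    rw [← hz i] at h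
    exact (integrable_map_measure
      ((measurable_id.const_mul u).exp).aestronglyMeasurable (hzm i).aemeasurable).mp h
  have hzval : ∀ (i : Fin n) (u : ℝ),
      ∫ ω, rexp (u * z i ω) ∂μ = rexp (σ ^ 2 * u ^ 2 / 2) := by
    intro i u
    have h1 : ∫ ω, rexp (u * z i ω) ∂μ = ∫ x, rexp (u * x) ∂(μ.map (z i)) :=
      (integral_map (hzm i).aemeasurable
        ((measurable_id.const_mul u).exp).aestronglyMeasurable).symm
    rw [h1, hz i]
    exact integral_exp_gaussian v hv u
  -- pointwise rewrite of the integrand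
  have hpt : ∀ ω, rexp K * ((1 / 2 ^ n : ℝ) *
        ∑ b ∈ B, rexp (t * ∑ i, (a * C ω i + z i ω) * b i))
      = ∑ b ∈ B, (rexp K * (1 / 2 ^ n : ℝ)) *
          (expDot s b (C ω) * expDot t b (fun i => z i ω)) := by
    intro ω
    rw [Finset.mul_sum, Finset.mul_sum]
    refine Finset.sum_congr rfl fun b _ => ?_
    rw [expDot, expDot, ← Real.exp_add]
    have harg : t * ∑ i, (a * C ω i + z i ω) * b i
        = s * ∑ i, C ω i * b i + t * ∑ i, z i ω * b i := by
      rw [Finset.mul_sum, Finset.mul_sum, Finset.mul_sum, ← Finset.sum_add_distrib]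
      refine Finset.sum_congr rfl fun i _ => ?_
      rw [ht, hs]; field_simp
    rw [harg]; ring
  rw [integral_congr_ae (Filter.Eventually.of_forall hpt)]
  -- integrability of the two factors
  have hFint : ∀ b : Fin n → ℝ, Integrable (fun ω => expDot s b (C ω)) μ := by
    intro b
    have h1 : Integrable (expDot s b) (μ.map C) := by
      rw [hCunif]
      refine Integrable.smul_measure ?_ (by simp)
      exact integrable_finset_sum_measure.mpr fun c _ =>
        integrable_dirac'' (measurable_expDot s b).stronglyMeasurable c
    exact (integrable_map_measure (measurable_expDot s b).aestronglyMeasurable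
      hCm.aemeasurable).mp h1
  have hGint : ∀ b : Fin n → ℝ, Integrable (fun ω => expDot t b (fun i => z i ω)) μ := by
    intro b
    have hXind : iIndepFun (fun i ω => b i * z i ω) μ :=
      hzindep.comp (fun i x => b i * x) (fun i => measurable_id.const_mul (b i))
    have hXm : ∀ i, Measurable fun ω => b i * z i ω := fun i => (hzm i).const_mul (b i)
    have h := hXind.integrable_exp_mul_sum (t := t) hXm (s := Finset.univ)
      (fun i _ => by
        have : (fun ω => rexp (t * (b i * z i ω))) = fun ω => rexp ((t * b i) * z i ω) := by
          funext ω; ring_nf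
        rw [this]; exact hzint i (t * b i))
    have heq : (fun ω => rexp (t * (∑ i : Fin n, fun ω => b i * z i ω) ω))
        = fun ω => expDot t b (fun i => z i ω) := by
      funext ω
      simp only [expDot, Finset.sum_apply]
      congr 2
      exact Finset.sum_congr rfl fun i _ => mul_comm _ _
    rwa [heq] at h
  have hInd : ∀ b : Fin n → ℝ, IndepFun (fun ω => expDot s b (C ω))
      (fun ω => expDot t b (fun i => z i ω)) μ :=
    fun b => hCz.comp (measurable_expDot s b) (measurable_expDot t b)
  have hIntProd : ∀ b ∈ B, Integrable
      (fun ω => (rexp K * (1 / 2 ^ n : ℝ)) *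
        (expDot s b (C ω) * expDot t b (fun i => z i ω))) μ :=
    fun b _ => (((hInd b).integrable_mul (hFint b) (hGint b))).const_mul _
  rw [integral_finset_sum B hIntProd]
  -- compute each term
  have hterm : ∀ b ∈ B,
      ∫ ω, (rexp K * (1 / 2 ^ n : ℝ)) *
        (expDot s b (C ω) * expDot t b (fun i => z i ω)) ∂μ
      = (1 / 2 ^ n : ℝ) * Real.cosh s ^ n := by
    intro b hb
    have hbpm : ∀ i, b i = -1 ∨ b i = 1 := by
      intro i
      have := (Fintype.mem_piFinset.mp hb) i
      simpa using this
    have hmul := (hInd b).integral_mul_eq_mul_integral (hFint b).aestronglyMeasurable (hGint b).aestronglyMeasurable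
    rw [integral_const_mul,
      show (fun ω => expDot s b (C ω) * expDot t b fun i => z i ω)
        = (fun ω => expDot s b (C ω)) * fun ω => expDot t b fun i => z i ω from rfl, hmul]
    -- value of the C-factor
    have hFval : ∫ ω, expDot s b (C ω) ∂μ = Real.cosh s ^ n := by
      have h1 : ∫ ω, expDot s b (C ω) ∂μ = ∫ c, expDot s b c ∂(μ.map C) :=
        (integral_map hCm.aemeasurable (measurable_expDot s b).aestronglyMeasurable).symm
      rw [h1, hCunif, integral_smul_measure,
        integral_finset_sum_measure (fun c _ =>
          integrable_dirac'' (measurable_expDot s b).stronglyMeasurable c)]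
      simp only [integral_dirac]
      have h2 : ∑ c ∈ B, expDot s b c = (2 * Real.cosh s) ^ n := by
        have h3 : ∀ c : Fin n → ℝ, expDot s b c = ∏ i, rexp (s * (c i * b i)) := by
          intro c
          rw [expDot, Finset.mul_sum, Real.exp_sum]
        rw [Finset.sum_congr rfl fun c _ => h3 c, hB, ← Finset.prod_univ_sum
          (fun _ : Fin n => ({-1, 1} : Finset ℝ)) (fun i x => rexp (s * (x * b i)))]
        have h4 : ∀ i : Fin n, ∑ x ∈ ({-1, 1} : Finset ℝ), rexp (s * (x * b i))
            = 2 * Real.cosh s := by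
          intro i
          rw [Finset.sum_insert (by norm_num), Finset.sum_singleton]
          rcases hbpm i with h | h <;>
            simp [h, Real.cosh_eq, mul_comm] <;> ring
        rw [Finset.prod_congr rfl fun i _ => h4 i, Finset.prod_const, Finset.card_univ,
          Fintype.card_fin]
      rw [h2]
      have h5 : (((2 : ENNReal) ^ n)⁻¹).toReal = ((2 : ℝ) ^ n)⁻¹ := by
        simp [ENNReal.toReal_inv]
      rw [h5, smul_eq_mul, mul_pow]
      have h6 : ((2 : ℝ) ^ n)⁻¹ * ((2 : ℝ) ^ n * Real.cosh s ^ n) = Real.cosh s ^ n := by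
        field_simp
      exact h6
    -- value of the z-factor
    have hGval : ∫ ω, expDot t b (fun i => z i ω) ∂μ = rexp (n * a ^ 2 / (2 * σ ^ 2)) := by
      have hXind : iIndepFun (fun i ω => b i * z i ω) μ :=
        hzindep.comp (fun i x => b i * x) (fun i => measurable_id.const_mul (b i))
      have hXm : ∀ i, Measurable fun ω => b i * z i ω := fun i => (hzm i).const_mul (b i)
      have heq : (fun ω => expDot t b (fun i => z i ω))
          = fun ω => rexp (t * (∑ i : Fin n, fun ω => b i * z i ω) ω) := by
        funext ω
        simp only [expDot, Finset.sum_apply]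
        congr 2
        exact Finset.sum_congr rfl fun i _ => mul_comm _ _
      rw [heq]
      have h1 : ∫ ω, rexp (t * (∑ i : Fin n, fun ω => b i * z i ω) ω) ∂μ
          = mgf (∑ i : Fin n, fun ω => b i * z i ω) μ t := rfl
      rw [h1, hXind.mgf_sum hXm]
      have h2 : ∀ i : Fin n, mgf (fun ω => b i * z i ω) μ t
          = rexp (a ^ 2 / σ ^ 2 / 2) := by
        intro i
        have h3 : mgf (fun ω => b i * z i ω) μ t
            = ∫ ω, rexp ((t * b i) * z i ω) ∂μ := by
          rw [mgf]
          congr 1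
          funext ω; ring_nf
        rw [h3, hzval i (t * b i)]
        congr 1
        have hb2 : (b i) ^ 2 = 1 := by rcases hbpm i with h | h <;> rw [h] <;> norm_num
        rw [ht]
        field_simp
        rw [hb2]
        ring
      rw [Finset.prod_congr rfl fun i _ => h2 i, Finset.prod_const, Finset.card_univ,
        Fintype.card_fin, ← Real.exp_nat_mul]
      congr 1
      ring
    rw [hFval, hGval, hK]
    rw [show rexp (-(↑n * a ^ 2) / (2 * σ ^ 2)) * (1 / 2 ^ n) *
        (Real.cosh s ^ n * rexp (↑n * a ^ 2 / (2 * σ ^ 2)))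
      = (1 / 2 ^ n : ℝ) * Real.cosh s ^ n *
        (rexp (-(↑n * a ^ 2) / (2 * σ ^ 2)) * rexp (↑n * a ^ 2 / (2 * σ ^ 2))) from by ring,
      ← Real.exp_add]
    rw [show -(↑n * a ^ 2) / (2 * σ ^ 2) + ↑n * a ^ 2 / (2 * σ ^ 2) = 0 from by ring,
      Real.exp_zero, mul_one]
  rw [Finset.sum_congr rfl hterm, Finset.sum_const]
  have hcard : B.card = 2 ^ n := by
    have h2 : ({-1, 1} : Finset ℝ).card = 2 := by
      rw [Finset.card_insert_of_notMem (by norm_num), Finset.card_singleton]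
    rw [hB, Fintype.card_piFinset, Finset.prod_congr rfl fun _ _ => h2, Finset.prod_const,
      Finset.card_univ, Fintype.card_fin]
  rw [hcard, nsmul_eq_mul]
  push_cast
  rw [hs]
  field_simp
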